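/- Let F be a field, (V_n)_{n∈ℤ} finite-dimensional F-vector spaces, and f_n : V_n → V_{n−1} linear maps such that, for some integer N, f_n is surjective for all n > N and injective for all n < N. Then the quotient 𝔸/𝕂 (inverse limit modulo eventually-zero sequences) is finite-dimensional, with dimension equal to dim(range(f_N ∘ f_{N+1})) ≤ min(dim V_{N+1}, dim V_{N−1}). -/

import Mathlib

/-- The canonical linear map `V a →ₗ[F] V b` induced by an equality `a = b`. -/
def castLinearMap (F : Type*) [Field F] {ι : Type*} (V : ι → Type*)
    [∀ i, AddCommGroup (V i)] [∀ i, Module F (V i)] {a b : ι} (h : a = b) :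
    V a →ₗ[F] V b := by subst h; exact LinearMap.id

section Aux

variable (F : Type*) [Field F] {ι : Type*} (V : ι → Type*)
    [∀ i, AddCommGroup (V i)] [∀ i, Module F (V i)]

lemma castLM_heq {a b : ι} (h : a = b) (v : V a) : HEq (castLinearMap F V h v) v := by
  subst h; rfl

lemma castLM_congr {a a' b : ι} (h1 : a = b) (h2 : a' = b) (v : V a) (v' : V a')
    (hv : HEq v v') : castLinearMap F V h1 v = castLinearMap F V h2 v' := by
  subst h1; subst h2; cases hv; rfl

lemma castLM_self {a : ι} (h : a = a) (v : V a) : castLinearMap F V h v = v :=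
  eq_of_heq (castLM_heq F V h v)

lemma castLM_cast {a b c : ι} (h1 : a = b) (h2 : b = c) (v : V a) :
    castLinearMap F V h2 (castLinearMap F V h1 v) = castLinearMap F V (h1.trans h2) v := by
  subst h1; subst h2; rfl

lemma cast_apply_eq {a b : ι} (h : a = b) (x : ∀ i, V i) :
    castLinearMap F V h (x a) = x b := by subst h; rfl

end Aux

section AuxZ

variable (F : Type*) [Field F] (V : ℤ → Type*)
    [∀ i, AddCommGroup (V i)] [∀ i, Module F (V i)]
    (f : (n : ℤ) → V n →ₗ[F] V (n - 1)) (N : ℤ)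

lemma f_cast {a b : ℤ} (h : a = b) (v : V a) :
    f b (castLinearMap F V h v) = castLinearMap F V (by rw [h]) (f a v) := by
  subst h; rfl

/-- Downward sequence starting from `v : V (N+1)`. -/
def seqD (v : V (N + 1)) : (k : ℕ) → V (N + 1 - (k : ℤ))
  | 0 => castLinearMap F V (by simp) v
  | (k + 1) => castLinearMap F V (by push_cast; ring)
      (f (N + 1 - (k : ℤ)) (seqD v k))

variable (hsurj : ∀ n > N, Function.Surjective (f n))

/-- Upward sequence starting from `v : V (N+1)`, using surjectivity. -/
noncomputable def seqU (v : V (N + 1)) : (k : ℕ) → V (N + 1 + (k : ℤ))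
  | 0 => castLinearMap F V (by simp) v
  | (k + 1) => (hsurj (N + 1 + ((k + 1 : ℕ) : ℤ)) (by push_cast; omega)
      (castLinearMap F V (by push_cast; ring) (seqU v k))).choose

lemma seqU_spec (v : V (N + 1)) (k : ℕ) :
    f (N + 1 + ((k + 1 : ℕ) : ℤ)) (seqU F V f N hsurj v (k + 1)) =
      castLinearMap F V (by push_cast; ring) (seqU F V f N hsurj v k) := by
  rw [seqU]
  exact (hsurj (N + 1 + ((k + 1 : ℕ) : ℤ)) (by push_cast; omega)
      (castLinearMap F V (by push_cast; ring) (seqU F V f N hsurj v k))).choose_spec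

/-- The full sequence indexed by `ℤ`. -/
noncomputable def seqX (v : V (N + 1)) (n : ℤ) : V n :=
  if h : n ≤ N + 1 then
    castLinearMap F V (show N + 1 - (((N + 1 - n).toNat : ℕ) : ℤ) = n by omega)
      (seqD F V f N v (N + 1 - n).toNat)
  else
    castLinearMap F V (show N + 1 + (((n - (N + 1)).toNat : ℕ) : ℤ) = n by omega)
      (seqU F V f N hsurj v (n - (N + 1)).toNat)

lemma seqX_below (v : V (N + 1)) (k : ℕ) (n : ℤ) (hn : n = N + 1 - (k : ℤ)) :
    seqX F V f N hsurj v n = castLinearMap F V hn.symm (seqD F V f N v k) := by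
  have hle : n ≤ N + 1 := by omega
  rw [seqX, dif_pos hle]
  have hk : (N + 1 - n).toNat = k := by omega
  subst hk
  rfl

lemma seqX_above (v : V (N + 1)) (k : ℕ) (n : ℤ) (hn : n = N + 1 + (k : ℤ)) :
    seqX F V f N hsurj v n = castLinearMap F V hn.symm (seqU F V f N hsurj v k) := by
  cases k with
  | zero =>
    have hle : n ≤ N + 1 := by omega
    rw [seqX, dif_pos hle]
    apply castLM_congr
    have hk : (N + 1 - n).toNat = 0 := by omega
    rw [hk, seqD, seqU]
  | succ k =>
    have hle : ¬ n ≤ N + 1 := by omega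
    rw [seqX, dif_neg hle]
    apply castLM_congr
    have hk : (n - (N + 1)).toNat = k + 1 := by omega
    rw [hk]

lemma seqX_mem (v : V (N + 1)) (n : ℤ) :
    seqX F V f N hsurj v (n - 1) = f n (seqX F V f N hsurj v n) := by
  by_cases hn : n ≤ N + 1
  · have hk : n = N + 1 - (((N + 1 - n).toNat : ℕ) : ℤ) := by omega
    set k := (N + 1 - n).toNat with hkdef
    rw [seqX_below F V f N hsurj v k n hk,
      seqX_below F V f N hsurj v (k + 1) (n - 1) (by push_cast; omega),
      f_cast, seqD, castLM_cast]
  · have hk : n = N + 1 + (((n - (N + 2)).toNat + 1 : ℕ) : ℤ) := by push_cast; omega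
    set k := (n - (N + 2)).toNat with hkdef
    rw [seqX_above F V f N hsurj v (k + 1) n hk,
      seqX_above F V f N hsurj v k (n - 1) (by omega),
      f_cast, seqU_spec, castLM_cast]

end AuxZ

/-- With finite-dimensional terms, surjectivity above `N` and injectivity
below `N`, the quotient `𝔸/𝕂` is finite-dimensional of dimension equal to the
rank of `f N ∘ f (N+1)`, which is at most `min (dim V (N+1)) (dim V (N-1))`. -/
theorem stmt11 (F : Type*) [Field F] (V : ℤ → Type*)
    [∀ n, AddCommGroup (V n)] [∀ n, Module F (V n)]
    [∀ n, FiniteDimensional F (V n)]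
    (f : (n : ℤ) → V n →ₗ[F] V (n - 1)) (N : ℤ)
    (hsurj : ∀ n > N, Function.Surjective (f n))
    (hinj : ∀ n < N, Function.Injective (f n))
    (A : Submodule F (∀ n, V n))
    (hA : ∀ x, x ∈ A ↔ ∀ n, x (n - 1) = f n (x n))
    (K : Submodule F A)
    (hK : ∀ x : A, x ∈ K ↔ ∃ M : ℤ, ∀ n ≤ M, (x : ∀ n, V n) n = 0) :
    FiniteDimensional F (A ⧸ K) ∧
    Module.finrank F (A ⧸ K) =
      Module.finrank F (LinearMap.range ((f N).comp
        ((castLinearMap F V (show N + 1 - 1 = N by ring)).comp (f (N + 1))))) ∧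
    Module.finrank F (LinearMap.range ((f N).comp
        ((castLinearMap F V (show N + 1 - 1 = N by ring)).comp (f (N + 1))))) ≤
      min (Module.finrank F (V (N + 1))) (Module.finrank F (V (N - 1))) := by
  classical
  set g := ((f N).comp
      ((castLinearMap F V (show N + 1 - 1 = N by ring)).comp (f (N + 1)))) with hg
  -- value of any element of `A` at `N - 1`
  have hval : ∀ x : ∀ n, V n, x ∈ A → x (N - 1) = g (x (N + 1)) := by
    intro x hx
    rw [hA] at hx
    rw [hx N, ← cast_apply_eq F V (show N + 1 - 1 = N by ring) x, hx (N + 1)]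
    rfl
  -- existence of elements of `A` with prescribed value at `N + 1`
  have hexists : ∀ v : V (N + 1), ∃ x : ∀ n, V n, x ∈ A ∧ x (N + 1) = v := by
    intro v
    refine ⟨fun n => seqX F V f N hsurj v n, (hA _).2 (fun n => seqX_mem F V f N hsurj v n), ?_⟩
    show seqX F V f N hsurj v (N + 1) = v
    rw [seqX_above F V f N hsurj v 0 (N + 1) (by simp), seqU, castLM_cast, castLM_self]
  -- kernel characterizations
  have hker1 : ∀ x : ∀ n, V n, x ∈ A → x (N - 1) = 0 → ∀ n ≤ N - 1, x n = 0 := by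
    intro x hx h0
    rw [hA] at hx
    have down : ∀ k : ℕ, x (N - 1 - (k : ℤ)) = 0 := by
      intro k
      induction k with
      | zero =>
        rw [← cast_apply_eq F V (show N - 1 = N - 1 - ((0 : ℕ) : ℤ) by simp) x, h0, map_zero]
      | succ k ih =>
        have h1 := hx (N - 1 - (k : ℤ))
        rw [ih, map_zero] at h1
        rw [← cast_apply_eq F V
          (show N - 1 - (k : ℤ) - 1 = N - 1 - ((k + 1 : ℕ) : ℤ) by push_cast; ring) x,
          h1, map_zero]
    intro n hn
    rw [← cast_apply_eq F V (show N - 1 - (((N - 1 - n).toNat : ℕ) : ℤ) = n by omega) x,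
      down, map_zero]
  have hker2 : ∀ x : ∀ n, V n, x ∈ A → (∃ M : ℤ, ∀ n ≤ M, x n = 0) → x (N - 1) = 0 := by
    rintro x hx ⟨M, hM⟩
    rw [hA] at hx
    by_cases hMN : N - 1 ≤ M
    · exact hM _ hMN
    · have up : ∀ k : ℕ, M + (k : ℤ) ≤ N - 1 → x (M + (k : ℤ)) = 0 := by
        intro k
        induction k with
        | zero =>
          intro _
          rw [← cast_apply_eq F V (show M = M + ((0 : ℕ) : ℤ) by simp) x, hM M le_rfl, map_zero]
        | succ k ih =>
          intro hle
          have hle' : M + (k : ℤ) ≤ N - 1 := by push_cast at hle ⊢; omega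
          have h1 := hx (M + (k : ℤ) + 1)
          have h2 : x (M + (k : ℤ) + 1 - 1) = 0 := by
            rw [← cast_apply_eq F V (show M + (k : ℤ) = M + (k : ℤ) + 1 - 1 by ring) x,
              ih hle', map_zero]
          have h3 : x (M + (k : ℤ) + 1) = 0 :=
            hinj (M + (k : ℤ) + 1) (by push_cast at hle; omega) (by rw [← h1, h2, map_zero])
          rw [← cast_apply_eq F V (show M + (k : ℤ) + 1 = M + ((k + 1 : ℕ) : ℤ) by push_cast; ring) x,
            h3, map_zero]
      have hfin := up (N - 1 - M).toNat (by omega)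
      rw [← cast_apply_eq F V (show M + (((N - 1 - M).toNat : ℕ) : ℤ) = N - 1 by omega) x,
        hfin, map_zero]
  -- the evaluation map
  let φ : A →ₗ[F] V (N - 1) := (LinearMap.proj (N - 1)).comp A.subtype
  have hKer : K = LinearMap.ker φ := by
    ext x
    rw [hK, LinearMap.mem_ker]
    constructor
    · intro h; exact hker2 x.1 x.2 h
    · intro h; exact ⟨N - 1, hker1 x.1 x.2 h⟩
  have hRange : LinearMap.range φ = LinearMap.range g := by
    ext w
    simp only [LinearMap.mem_range]
    constructor
    · rintro ⟨x, rfl⟩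
      exact ⟨x.1 (N + 1), (hval x.1 x.2).symm⟩
    · rintro ⟨v, rfl⟩
      obtain ⟨x, hxA, hxv⟩ := hexists v
      exact ⟨⟨x, hxA⟩, by show x (N - 1) = g v; rw [hval x hxA, hxv]⟩
  have e : (A ⧸ K) ≃ₗ[F] LinearMap.range g :=
    ((Submodule.quotEquivOfEq K (LinearMap.ker φ) hKer).trans φ.quotKerEquivRange).trans
      (LinearEquiv.ofEq _ _ hRange)
  refine ⟨Module.Finite.equiv e.symm, e.finrank_eq, ?_⟩
  exact le_min (LinearMap.finrank_range_le g) (Submodule.finrank_le _)
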